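/- The Continuum Hypothesis holds if and only if the set of all nonzero real numbers can be written as the union of countably many Hamel bases of ℝ. -/

import Mathlib

namespace EK

open Cardinal Set Submodule

universe v

lemma ch_univ_iff : (continuum.{v} = aleph.{v} 1) ↔ (continuum.{0} = aleph.{0} 1) := by
  rw [← lift_continuum.{v, 0},
    show (1 : Ordinal.{v}) = Ordinal.lift.{v, 0} 1 from (Ordinal.lift_one).symm,
    ← lift_aleph.{0, v}, lift_inj]


/-- In a linearly independent set, any vanishing finite rational combination has all
coefficients zero. -/
lemma comb_of_indep {S : Set ℝ} (hS : LinearIndependent ℚ (fun x : S => (x : ℝ)))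
    {s : Finset ℝ} (hs : ↑s ⊆ S) {c : ℝ → ℚ} (h : ∑ x ∈ s, c x • x = 0) :
    ∀ x ∈ s, c x = 0 := by
  classical
  intro x hx
  set t : Finset S := s.attach.map ⟨fun y => (⟨y.1, hs y.2⟩ : S), by
      intro a b hab
      have hab' := congrArg Subtype.val hab
      exact Subtype.ext hab'⟩ with ht
  have hsum : ∑ i ∈ t, c (i : ℝ) • (i : ℝ) = 0 := by
    rw [ht, Finset.sum_map]
    exact (Finset.sum_attach s (fun y => c y • y)).trans h
  have := linearIndependent_iff'.mp hS t (fun i => c (i : ℝ)) hsum ⟨x, hs hx⟩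
    (by
      rw [ht, Finset.mem_map]
      exact ⟨⟨x, hx⟩, Finset.mem_attach _ _, rfl⟩)
  exact this

/-- Converse: if every vanishing finite combination is trivial, the set is independent. -/
lemma indep_of_comb {S : Set ℝ}
    (h : ∀ s : Finset ℝ, ↑s ⊆ S → ∀ c : ℝ → ℚ, ∑ x ∈ s, c x • x = 0 → ∀ x ∈ s, c x = 0) :
    LinearIndependent ℚ (fun x : S => (x : ℝ)) := by
  classical
  rw [linearIndependent_iff']
  intro s g hsum i hi
  set c : ℝ → ℚ := fun x => if hx : x ∈ S then g ⟨x, hx⟩ else 0 with hc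
  have hcoe : ∀ j : S, c (j : ℝ) = g j := by
    intro j; simp [hc, j.2]
  have hsum' : ∑ x ∈ s.image (fun j : S => (j : ℝ)), c x • x = 0 := by
    rw [Finset.sum_image (by intro a _ b _ hab; exact Subtype.ext hab)]
    simp only [hcoe]
    exact hsum
  have := h (s.image (fun j : S => (j : ℝ)))
    (by intro x hx; rcases Finset.mem_image.mp hx with ⟨j, _, rfl⟩; exact j.2)
    c hsum' (i : ℝ) (Finset.mem_image_of_mem _ hi)
  rwa [hcoe] at this

lemma quad_ne {S : Set ℝ} (hS : LinearIndependent ℚ (fun x : S => (x : ℝ)))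
    {u v w z : ℝ} (hu : u ∈ S) (hv : v ∈ S) (hw : w ∈ S) (hz : z ∈ S)
    (huv : u ≠ v) (huw : u ≠ w) (huz : u ≠ z) (hvw : v ≠ w) (hvz : v ≠ z) (hwz : w ≠ z) :
    u + z ≠ v + w := by
  classical
  intro he
  set c : ℝ → ℚ := fun x => if x = u ∨ x = z then 1 else -1 with hc
  have hsub : ↑({u, v, w, z} : Finset ℝ) ⊆ S := by
    intro x hx
    simp only [Finset.coe_insert, Finset.coe_singleton, Set.mem_insert_iff,
      Set.mem_singleton_iff] at hx
    rcases hx with rfl | rfl | rfl | rfl <;> assumption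
  have hsum : ∑ x ∈ ({u, v, w, z} : Finset ℝ), c x • x = 0 := by
    rw [Finset.sum_insert (by simp [huv, huw, huz]),
      Finset.sum_insert (by simp [hvw, hvz]), Finset.sum_pair hwz]
    have cu : c u = 1 := by simp [hc]
    have cz : c z = 1 := by simp [hc]
    have cv : c v = -1 := by simp [hc, Ne.symm huv, hvz]
    have cw : c w = -1 := by simp [hc, Ne.symm huw, hwz]
    rw [cu, cz, cv, cw]
    simp only [one_smul, neg_smul]
    linarith [he]
  have := comb_of_indep hS hsub hsum u (by simp)
  simp [hc] at this

lemma pair_ne_zero {S : Set ℝ} (hS : LinearIndependent ℚ (fun x : S => (x : ℝ)))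
    {x y : ℝ} (hx : x ∈ S) (hy : y ∈ S) (hxy : x ≠ y) : x + y ≠ 0 := by
  classical
  intro he
  have hsub : ↑({x, y} : Finset ℝ) ⊆ S := by
    intro a ha
    simp only [Finset.coe_insert, Finset.coe_singleton, Set.mem_insert_iff,
      Set.mem_singleton_iff] at ha
    rcases ha with rfl | rfl <;> assumption
  have hsum : ∑ a ∈ ({x, y} : Finset ℝ), (fun _ : ℝ => (1 : ℚ)) a • a = 0 := by
    rw [Finset.sum_pair hxy]
    simpa using he
  have := comb_of_indep hS hsub hsum x (by simp)
  simp at this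

lemma ch_of_decomp (B : ℕ → Set ℝ)
    (hind : ∀ n, LinearIndependent ℚ (fun x : B n => (x : ℝ)))
    (hspan : Submodule.span ℚ (B 0) = ⊤)
    (hU : {x : ℝ | x ≠ 0} = ⋃ n, B n) :
    Cardinal.continuum.{0} = Cardinal.aleph.{0} 1 := by
  classical
  refine le_antisymm ?_ aleph_one_le_continuum
  by_contra hlt
  push_neg at hlt
  set κ : Cardinal.{0} := Order.succ (aleph 1) with hκ
  have hκc : κ ≤ continuum := Order.succ_le_of_lt hlt
  -- the basis B 0 has size at least κ
  have hrank : continuum ≤ #(B 0) := by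
    calc continuum = Module.rank ℚ ℝ := Real.rank_rat_real.symm
      _ = Module.rank ℚ (⊤ : Submodule ℚ ℝ) := (rank_top ℚ ℝ).symm
      _ = Module.rank ℚ (Submodule.span ℚ (B 0)) := by rw [hspan]
      _ ≤ #(B 0) := rank_span_le (R := ℚ) (B 0)
  set A := κ.ord.ToType
  set C := (aleph 1).ord.ToType
  have hAC : #(A ⊕ C) ≤ #(B 0) := by
    have h1 : #(A ⊕ C) = κ + aleph 1 := by
      simp [A, C, mk_ord_toType]
    rw [h1]
    have : κ + aleph 1 = κ :=
      Cardinal.add_eq_left ((aleph0_le_aleph 1).trans (Order.le_succ _)) (Order.le_succ _)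
    rw [this]
    exact hκc.trans hrank
  obtain ⟨j⟩ := Cardinal.le_def _ _ |>.mp hAC
  set a : A → ℝ := fun η => (j (Sum.inl η) : ℝ) with ha
  set b : C → ℝ := fun ξ => (j (Sum.inr ξ) : ℝ) with hb
  have haB : ∀ η, a η ∈ B 0 := fun η => (j (Sum.inl η)).2
  have hbB : ∀ ξ, b ξ ∈ B 0 := fun ξ => (j (Sum.inr ξ)).2
  have hcoe : ∀ p q : A ⊕ C, p ≠ q → (j p : ℝ) ≠ (j q : ℝ) := by
    intro p q hpq h
    exact hpq (j.injective (Subtype.ext h))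
  have hainj : ∀ η η', η ≠ η' → a η ≠ a η' := fun η η' h =>
    hcoe _ _ (by simp [h])
  have hbinj : ∀ ξ ξ', ξ ≠ ξ' → b ξ ≠ b ξ' := fun ξ ξ' h =>
    hcoe _ _ (by simp [h])
  have hab : ∀ η ξ, a η ≠ b ξ := fun η ξ => hcoe _ _ (by simp)
  -- the coloring
  have hmem : ∀ η ξ, ∃ n, a η + b ξ ∈ B n := by
    intro η ξ
    have hne : a η + b ξ ∈ {x : ℝ | x ≠ 0} :=
      pair_ne_zero (hind 0) (haB η) (hbB ξ) (hab η ξ)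
    rw [hU] at hne
    exact Set.mem_iUnion.mp hne
  choose F hF using hmem
  -- fibers: for each η there exist two distinct ξ's with the same color
  have hfib : ∀ η, ∃ ξ₁ ξ₂, F η ξ₁ = F η ξ₂ ∧ ξ₁ ≠ ξ₂ := by
    intro η
    apply Function.not_injective_iff.mp
    intro hinj
    have := Cardinal.mk_le_of_injective hinj
    rw [Cardinal.mk_ord_toType, Cardinal.mk_nat] at this
    exact absurd this (not_le.mpr aleph0_lt_aleph_one)
  choose ξ₁ ξ₂ hfeq hfne using hfib
  -- the map η ↦ (color, ξ₁, ξ₂) is injective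
  have hinj : Function.Injective (fun η => (F η (ξ₁ η), ξ₁ η, ξ₂ η) : A → ℕ × C × C) := by
    intro η η' h
    by_contra hne
    simp only [Prod.mk.injEq] at h
    obtain ⟨hn, hp, hq⟩ := h
    have h1 : a η + b (ξ₁ η) ∈ B (F η (ξ₁ η)) := hF _ _
    have h2 : a η + b (ξ₂ η) ∈ B (F η (ξ₁ η)) := by rw [hfeq η]; exact hF _ _
    have h3 : a η' + b (ξ₁ η) ∈ B (F η (ξ₁ η)) := by rw [hn, hp]; exact hF _ _
    have h4 : a η' + b (ξ₂ η) ∈ B (F η (ξ₁ η)) := by rw [hn, hfeq η', hq]; exact hF _ _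
    have haa : a η ≠ a η' := hainj _ _ hne
    have hbb : b (ξ₁ η) ≠ b (ξ₂ η) := hbinj _ _ (hfne η)
    have d12 : a η + b (ξ₁ η) ≠ a η + b (ξ₂ η) := by
      intro h; exact hbb (by linarith)
    have d13 : a η + b (ξ₁ η) ≠ a η' + b (ξ₁ η) := by
      intro h; exact haa (by linarith)
    have d14 : a η + b (ξ₁ η) ≠ a η' + b (ξ₂ η) :=
      quad_ne (hind 0) (haB η) (haB η') (hbB (ξ₂ η)) (hbB (ξ₁ η))
        haa (hab η (ξ₂ η)) (hab η (ξ₁ η)) (hab η' (ξ₂ η)) (hab η' (ξ₁ η)) (Ne.symm hbb)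
    have d23 : a η + b (ξ₂ η) ≠ a η' + b (ξ₁ η) :=
      quad_ne (hind 0) (haB η) (haB η') (hbB (ξ₁ η)) (hbB (ξ₂ η))
        haa (hab η (ξ₁ η)) (hab η (ξ₂ η)) (hab η' (ξ₁ η)) (hab η' (ξ₂ η)) hbb
    have d24 : a η + b (ξ₂ η) ≠ a η' + b (ξ₂ η) := by
      intro h; exact haa (by linarith)
    have d34 : a η' + b (ξ₁ η) ≠ a η' + b (ξ₂ η) := by
      intro h; exact hbb (by linarith)
    exact quad_ne (hind (F η (ξ₁ η))) h1 h2 h3 h4 d12 d13 d14 d23 d24 d34 (by ring)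
  have hcard : κ ≤ aleph 1 := by
    have := Cardinal.mk_le_of_injective hinj
    rw [Cardinal.mk_ord_toType] at this
    calc κ ≤ #(ℕ × C × C) := this
      _ = ℵ₀ * (aleph 1 * aleph 1) := by simp [C, mk_ord_toType]
      _ = aleph 1 := by
        rw [Cardinal.mul_eq_self (aleph0_le_aleph 1),
          Cardinal.mul_eq_max le_rfl (aleph0_le_aleph 1)]
        · exact max_eq_right (aleph0_le_aleph 1)
  exact absurd hcard (not_le.mpr (Order.lt_succ _))

lemma decomp_of_ch (hch : Cardinal.continuum.{0} = Cardinal.aleph.{0} 1) :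
    ∃ B : ℕ → Set ℝ,
      (∀ n, LinearIndependent ℚ (fun x : B n => (x : ℝ)) ∧
        Submodule.span ℚ (B n) = ⊤) ∧
      {x : ℝ | x ≠ 0} = ⋃ n, B n := by
  classical
  set W := (aleph 1).ord.ToType with hW
  have heq : #ℝ = #W := by
    rw [Cardinal.mk_real, Cardinal.mk_ord_toType, hch]
  obtain ⟨eR⟩ := Cardinal.eq.mp heq
  -- initial segments and their spans
  set sset : W → Set ℝ := fun w => {z | eR z ≤ w} with hsset
  have hsc : ∀ w, (sset w).Countable := by
    intro w
    have h1 : (Set.Iio w).Countable := by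
      rw [Cardinal.countable_iff_lt_aleph_one]
      exact Cardinal.mk_Iio_ord_toType w
    have h2 : (Set.Iic w).Countable := by
      have : Set.Iic w ⊆ insert w (Set.Iio w) := by
        intro u hu
        rcases lt_or_eq_of_le (Set.mem_Iic.mp hu) with h | h
        · exact Set.mem_insert_of_mem _ h
        · exact h ▸ Set.mem_insert _ _
      exact (h1.insert w).mono this
    have : sset w = eR ⁻¹' (Set.Iic w) := rfl
    rw [this]
    exact h2.preimage eR.injective
  set Vle : W → Submodule ℚ ℝ := fun w => span ℚ (sset w) with hVle
  have hVc : ∀ w, ((Vle w : Submodule ℚ ℝ) : Set ℝ).Countable := by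
    intro w
    have hcs : Countable (sset w) := (hsc w).to_subtype
    have h1 : Set.range ((↑) : sset w → ℝ) = sset w := Subtype.range_coe
    have h2 : Countable (span ℚ (Set.range ((↑) : sset w → ℝ))) := inferInstance
    rw [h1] at h2
    exact Set.countable_coe_iff.mp h2
  have wf : WellFounded ((· < ·) : W → W → Prop) := IsWellFounded.wf
  have hself : ∀ z : ℝ, z ∈ Vle (eR z) := fun z => subset_span (by simp [hsset])
  set t : ℝ → W := fun z => wf.min {w | z ∈ Vle w} ⟨eR z, hself z⟩ with htdef
  have htmem : ∀ z, z ∈ Vle (t z) := by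
    intro z
    exact wf.min_mem {w | z ∈ Vle w} ⟨eR z, hself z⟩
  have htmin : ∀ z w, z ∈ Vle w → ¬ w < t z := fun z w h => wf.not_lt_min _ h
  -- a nonzero real is not in the span of strictly earlier elements
  have keyA : ∀ z : ℝ, z ≠ 0 → z ∉ span ℚ {y : ℝ | eR y < t z} := by
    intro z hz hmem
    rcases mem_span_set.mp hmem with ⟨l, hsupp, hsum⟩
    rcases Finset.eq_empty_or_nonempty l.support with hemp | hne
    · rw [Finsupp.support_eq_empty.mp hemp] at hsum
      simp at hsum
      exact hz hsum.symm
    · have hne' : (l.support.image eR).Nonempty := hne.image _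
      set m := (l.support.image eR).max' hne' with hm
      have hzm : z ∈ Vle m := by
        rw [← hsum, Finsupp.sum]
        apply Submodule.sum_mem
        intro y hy
        apply Submodule.smul_mem
        apply subset_span
        show eR y ≤ m
        exact Finset.le_max' _ _ (Finset.mem_image_of_mem _ hy)
      obtain ⟨y₀, hy₀, hy₀m⟩ := Finset.mem_image.mp ((l.support.image eR).max'_mem hne')
      have hmt : m < t z := by
        rw [hm, ← hy₀m]
        exact hsupp hy₀
      exact htmin z m hzm hmt
  -- layers
  set L : W → Set ℝ := fun w => {z | z ≠ 0 ∧ t z = w} with hL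
  have hLc : ∀ w, (L w).Countable := by
    intro w
    refine (hVc w).mono ?_
    intro z hz
    have := htmem z
    rw [hz.2] at this
    exact this
  have hφ : ∀ w, ∃ g : ℝ → ℕ, Set.InjOn g (L w) :=
    fun w => Set.countable_iff_exists_injOn.mp (hLc w)
  choose φ hφinj using hφ
  set X : ℕ → Set ℝ := fun n => {z | z ≠ 0 ∧ φ (t z) z = n} with hX
  have htinj : ∀ n, ∀ z z', z ∈ X n → z' ∈ X n → t z = t z' → z = z' := by
    intro n z z' hz hz' he
    have h1 : z ∈ L (t z) := ⟨hz.1, rfl⟩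
    have h2 : z' ∈ L (t z) := ⟨hz'.1, he.symm⟩
    apply hφinj (t z) h1 h2
    have : φ (t z') z' = n := hz'.2
    rw [← he] at this
    rw [hz.2, this]
  -- each X n is linearly independent
  have hXind : ∀ n, LinearIndependent ℚ (fun x : X n => (x : ℝ)) := by
    intro n
    apply indep_of_comb
    intro s
    induction s using Finset.strongInduction with
    | _ s ih =>
      intro hsub c hsum
      rcases Finset.eq_empty_or_nonempty s with rfl | hne
      · simp
      · have hne' : (s.image (fun z => t z)).Nonempty := hne.image _
        obtain ⟨x₀, hx₀s, hx₀⟩ := Finset.mem_image.mp ((s.image (fun z => t z)).max'_mem hne')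
        have hlt : ∀ y ∈ s, y ≠ x₀ → t y < t x₀ := by
          intro y hy hyne
          have h1 : t y ≤ (s.image (fun z => t z)).max' hne' :=
            Finset.le_max' _ _ (Finset.mem_image_of_mem _ hy)
          rw [← hx₀] at h1
          refine lt_of_le_of_ne h1 ?_
          intro he
          exact hyne (htinj n y x₀ (hsub hy) (hsub hx₀s) he)
        have hc₀ : c x₀ = 0 := by
          by_contra hc
          have hadd : c x₀ • x₀ + ∑ y ∈ s.erase x₀, c y • y = 0 :=
            (Finset.add_sum_erase s (fun y => c y • y) hx₀s).trans hsum
          have hsum' : c x₀ • x₀ = -∑ y ∈ s.erase x₀, c y • y :=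
            eq_neg_of_add_eq_zero_left hadd
          have hmem' : (∑ y ∈ s.erase x₀, c y • y) ∈ span ℚ {y : ℝ | eR y < t x₀} := by
            apply Submodule.sum_mem
            intro y hy
            apply Submodule.smul_mem
            have h2 : t y < t x₀ :=
              hlt y (Finset.mem_of_mem_erase hy) (Finset.ne_of_mem_erase hy)
            have h3 : y ∈ Vle (t y) := htmem y
            have h4 : sset (t y) ⊆ {u : ℝ | eR u < t x₀} := by
              intro u hu
              exact lt_of_le_of_lt hu h2
            exact Submodule.span_mono h4 h3
          have hx₀mem : x₀ ∈ span ℚ {y : ℝ | eR y < t x₀} := by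
            have h5 : (c x₀)⁻¹ • (c x₀ • x₀) ∈ span ℚ {y : ℝ | eR y < t x₀} := by
              rw [hsum']
              exact Submodule.smul_mem _ _ (Submodule.neg_mem _ hmem')
            rwa [smul_smul, inv_mul_cancel₀ hc, one_smul] at h5
          exact keyA x₀ (hsub hx₀s).1 hx₀mem
        have hsum'' : ∑ y ∈ s.erase x₀, c y • y = 0 := by
          have hadd : c x₀ • x₀ + ∑ y ∈ s.erase x₀, c y • y = 0 :=
            (Finset.add_sum_erase s (fun y => c y • y) hx₀s).trans hsum
          rw [hc₀, zero_smul, zero_add] at hadd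
          exact hadd
        intro x hx
        by_cases hxx : x = x₀
        · rw [hxx]; exact hc₀
        · exact ih (s.erase x₀) (Finset.erase_ssubset hx₀s)
            (fun y hy => hsub (Finset.mem_of_mem_erase hy)) c hsum'' x
            (Finset.mem_erase.mpr ⟨hxx, hx⟩)
  -- extend each X n to a Hamel basis
  have hXind' : ∀ n, LinearIndepOn ℚ id (X n) := hXind
  refine ⟨fun n => (hXind' n).extend (Set.subset_univ (X n)), fun n => ⟨?_, ?_⟩, ?_⟩
  · exact (hXind' n).linearIndepOn_extend _
  · rw [eq_top_iff]
    intro x _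
    exact (hXind' n).subset_span_extend (Set.subset_univ (X n)) (Set.mem_univ x)
  · ext z
    simp only [Set.mem_setOf_eq, Set.mem_iUnion]
    constructor
    · intro hz
      exact ⟨φ (t z) z, (hXind' _).subset_extend _ ⟨hz, rfl⟩⟩
    · rintro ⟨n, hn⟩
      intro h0
      have := ((hXind' n).linearIndepOn_extend (Set.subset_univ (X n))).ne_zero
        hn
      exact this (by simpa using h0)

end EK


/-- The Continuum Hypothesis holds if and only if the set of all nonzero real numbers can be
written as the union of countably many Hamel bases of `ℝ` (i.e. bases of `ℝ` as a vector
space over `ℚ`). -/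
theorem ch_iff_nonzero_reals_union_of_hamel_bases :
    Cardinal.continuum = Cardinal.aleph 1 ↔
      ∃ B : ℕ → Set ℝ,
        (∀ n, LinearIndependent ℚ (fun x : B n => (x : ℝ)) ∧
          Submodule.span ℚ (B n) = ⊤) ∧
        {x : ℝ | x ≠ 0} = ⋃ n, B n := by
  rw [EK.ch_univ_iff]
  constructor
  · intro h
    exact EK.decomp_of_ch h
  · rintro ⟨B, hB, hU⟩
    exact EK.ch_of_decomp B (fun n => (hB n).1) ((hB 0).2) hU
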